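/- Let n, n' be positive integers and let h ≥ 1 be an integer. Suppose that for every ε' > 0 there exists ε > 0 such that for every positive integer m with ‖α·m‖ < ε there exists a positive integer m' with ‖α·m'‖ < ε' and |Δ∘g(n, m') − Δ∘g(n', m)| ≤ h. Then there exists a positive integer t such that n' = t·n and ⌊α·n'⌉ = t·⌊α·n⌉. -/

import Mathlib

/-!
STATEMENT 9: if Δ∘g(n, m') can always approximately match Δ∘g(n', m), then
n' = t·n and ⌊α·n'⌉ = t·⌊α·n⌉ for some positive integer t.
-/

namespace Stmt9

set_option maxHeartbeats 1600000

/-- The symmetric discrete derivative `Δ∘g(n, m) = g(n+m) − g(n) − g(m) + g(0)`. -/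
def Δo (g : ℤ → ℤ) (n m : ℤ) : ℤ := g (n + m) - g n - g m + g 0

/-- `round` is the nearest integer: `|x - round x| ≤ |x - z|` for any integer `z`. -/
lemma round_eq_of_abs_lt {x : ℝ} {z : ℤ} (h : |x - z| < 1/2) : round x = z := by
  have h1 : round (x - z + z) = round (x - (z:ℝ)) + z := round_add_intCast _ _
  have h2 : round ((x:ℝ) - z) = 0 := by
    rw [round_eq_zero_iff]
    constructor
    · linarith [abs_lt.mp h |>.1]
    · linarith [abs_lt.mp h |>.2]
  simpa [h2] using h1

lemma abs_sub_round_le (x : ℝ) (z : ℤ) : |x - round x| ≤ |x - z| := by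
  rcases lt_or_ge |x - z| (1/2) with hlt | hle
  · rw [round_eq_of_abs_lt hlt]
  · exact le_trans (abs_sub_round x) hle

lemma nd_add (x y : ℝ) :
    |x + y - round (x + y)| ≤ |x - round x| + |y - round y| := by
  have := abs_sub_round_le (x + y) (round x + round y)
  refine le_trans this ?_
  have : x + y - ((round x + round y : ℤ) : ℝ) = (x - round x) + (y - round y) := by
    push_cast; ring
  rw [this]
  exact abs_add_le _ _

lemma nd_nsmul (x : ℝ) (j : ℕ) : |j * x - round (j * x)| ≤ j * |x - round x| := by
  induction j with
  | zero => simp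
  | succ k ih =>
    have : ((k:ℝ)+1) * x = (k:ℝ) * x + x := by ring
    push_cast
    rw [this]
    calc |(k:ℝ) * x + x - round ((k:ℝ)*x + x)| ≤ |(k:ℝ)*x - round ((k:ℝ)*x)| + |x - round x| :=
          nd_add _ _
      _ ≤ (k:ℝ) * |x - round x| + |x - round x| := by linarith
      _ = ((k:ℝ)+1) * |x - round x| := by ring

/-- For irrational `x`, the distance to the nearest integer is strictly less than 1/2. -/
lemma abs_sub_round_lt_half {x : ℝ} (hx : Irrational x) : |x - round x| < 1/2 := by
  rcases lt_or_eq_of_le (abs_sub_round x) with h | h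
  · exact h
  · exfalso
    rcases abs_eq (by norm_num : (0:ℝ) ≤ 1/2) |>.mp h with h' | h'
    · exact hx ⟨(round x : ℚ) + 1/2, by push_cast; linarith⟩
    · exact hx ⟨(round x : ℚ) - 1/2, by push_cast; linarith⟩

lemma nd_pos {x : ℝ} (hx : Irrational x) : 0 < |x - round x| := by
  rcases eq_or_lt_of_le (abs_nonneg (x - round x)) with h | h
  · exfalso
    exact (hx.ne_int (round x)) (by linarith [abs_eq_zero.mp h.symm] : x = round x)
  · exact h

def sub (α : ℝ) : AddSubgroup ℝ where
  carrier := {x | ∃ q z : ℤ, x = q * α + z}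
  zero_mem' := ⟨0, 0, by simp⟩
  add_mem' := by
    rintro a b ⟨q, z, rfl⟩ ⟨q', z', rfl⟩
    exact ⟨q + q', z + z', by push_cast; ring⟩
  neg_mem' := by
    rintro a ⟨q, z, rfl⟩
    exact ⟨-q, -z, by push_cast; ring⟩

lemma sub_dense {α : ℝ} (hirr : Irrational α) : Dense ((sub α : Set ℝ)) := by
  rcases AddSubgroup.dense_or_cyclic (sub α) with h | ⟨a, ha⟩
  · exact h
  · exfalso
    have h1 : (1:ℝ) ∈ sub α := ⟨0, 1, by simp⟩
    have hα : α ∈ sub α := ⟨1, 0, by simp⟩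
    rw [ha] at h1 hα
    rcases AddSubgroup.mem_closure_singleton.mp h1 with ⟨m, hm⟩
    rcases AddSubgroup.mem_closure_singleton.mp hα with ⟨k, hk⟩
    rw [zsmul_eq_mul] at hm hk
    have hm' : a * (m:ℝ) = 1 := by rw [mul_comm] at hm; exact hm
    have ha0 : a = 1 / (m:ℝ) := eq_one_div_of_mul_eq_one_left hm'
    have hm0 : (m:ℝ) ≠ 0 := by
      rintro h0; rw [h0] at hm; simp at hm
    have hαeq : α = (k:ℝ)/(m:ℝ) := by rw [← hk, ha0]; ring
    exact hirr ⟨(k : ℚ) / (m : ℚ), by push_cast; exact hαeq.symm⟩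

/-- small nonzero element of ℤα+ℤ with positive α-coefficient -/
lemma exists_small {α : ℝ} (hirr : Irrational α) {δ : ℝ} (hδ : 0 < δ) (hδ1 : δ ≤ 1) :
    ∃ (q z : ℤ), 0 < q ∧ q * α + z ≠ 0 ∧ |q * α + (z:ℝ)| < δ := by
  obtain ⟨x, hx1, hx2⟩ := Metric.dense_iff.mp (sub_dense hirr) (δ/2) (δ/4) (by positivity)
  rw [Metric.mem_ball, Real.dist_eq] at hx1
  obtain ⟨q, z, rfl⟩ := hx2
  have h1 : (0:ℝ) < q * α + z := by cases abs_lt.mp hx1; linarith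
  have h2 : (q:ℝ) * α + z < δ := by cases abs_lt.mp hx1; linarith
  have hq0 : q ≠ 0 := by
    rintro rfl
    simp only [Int.cast_zero, zero_mul, zero_add] at h1 h2
    have hz1 : (0:ℤ) < z := by exact_mod_cast h1
    have : (z:ℝ) ≥ 1 := by exact_mod_cast hz1
    linarith
  rcases hq0.lt_or_gt with hq | hq
  · exact ⟨-q, -z, by omega, by push_cast; intro hc; apply ne_of_gt h1; linarith,
      by push_cast; rw [show -(q:ℝ) * α + -(z:ℝ) = -((q:ℝ)*α + z) by ring, abs_neg,
        abs_of_pos h1]; exact h2⟩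
  · exact ⟨q, z, hq, ne_of_gt h1, by rw [abs_of_pos h1]; exact h2⟩

/-- Forward orbit density. -/
lemma forward_dense {α : ℝ} (hirr : Irrational α) (y : ℝ) {δ : ℝ} (hδ : 0 < δ) (hδ1 : δ ≤ 1) :
    ∃ j z : ℤ, 0 < j ∧ |j * α - y - z| < δ := by
  obtain ⟨q, z, hq, hg0, hgδ⟩ := exists_small hirr hδ hδ1
  set g : ℝ := q * α + z with hg
  rcases hg0.lt_or_gt with hneg | hpos
  · -- g < 0 : walk down to y + z' ≤ 0
    set z' : ℤ := ⌊-y⌋ with hz'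
    have hyz : y + z' ≤ 0 := by
      have := Int.floor_le (-y); linarith
    set k : ℤ := ⌊(y + z')/g⌋ + 1 with hk
    have hk1 : 1 ≤ k := by
      have h0 : (0:ℝ) ≤ (y + z')/g := by
        rw [← neg_div_neg_eq]
        exact div_nonneg (by linarith) (by linarith)
      have := Int.le_floor.mpr (by exact_mod_cast h0 : ((0:ℤ):ℝ) ≤ (y + z')/g)
      omega
    have hw1 : (k:ℝ) * g < y + z' := by
      have h1 : (y + z')/g < (k:ℝ) := by
        rw [hk]; push_cast; exact Int.lt_floor_add_one _
      have := (div_lt_iff_of_neg hneg).mp h1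
      linarith
    have hw2 : y + (z':ℝ) ≤ k * g - g := by
      have h1 : ((k:ℝ) - 1) ≤ (y + z')/g := by
        rw [hk]; push_cast; linarith [Int.floor_le ((y + (z':ℝ))/g)]
      have := (le_div_iff_of_neg hneg).mp h1
      nlinarith
    refine ⟨k * q, z' - k * z, by positivity, ?_⟩
    have heq : (↑(k*q):ℝ) * α - y - (↑(z' - k * z):ℝ) = k * g - (y + z') := by
      push_cast [hg]; ring
    rw [heq, abs_sub_comm, abs_of_pos (by linarith)]
    have : -g < δ := by rw [abs_of_neg hneg] at hgδ; exact hgδ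
    linarith
  · -- g > 0 : walk up to y + z' ≥ 0
    set z' : ℤ := ⌈-y⌉ with hz'
    have hyz : 0 ≤ y + z' := by
      have := Int.le_ceil (-y); linarith
    set k : ℤ := ⌊(y + z')/g⌋ + 1 with hk
    have hk1 : 1 ≤ k := by
      have h0 : (0:ℝ) ≤ (y + z')/g := div_nonneg hyz (le_of_lt hpos)
      have := Int.le_floor.mpr (by exact_mod_cast h0 : ((0:ℤ):ℝ) ≤ (y + z')/g)
      omega
    have hw1 : y + (z':ℝ) < k * g := by
      have h1 : (y + z')/g < (k:ℝ) := by
        rw [hk]; push_cast; exact Int.lt_floor_add_one _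
      have := (div_lt_iff₀ hpos).mp h1
      linarith
    have hw2 : (k:ℝ) * g - g ≤ y + z' := by
      have h1 : ((k:ℝ) - 1) ≤ (y + z')/g := by
        rw [hk]; push_cast; linarith [Int.floor_le ((y + (z':ℝ))/g)]
      have := (le_div_iff₀ hpos).mp h1
      nlinarith
    refine ⟨k * q, z' - k * z, by positivity, ?_⟩
    have heq : (↑(k*q):ℝ) * α - y - (↑(z' - k * z):ℝ) = k * g - (y + z') := by
      push_cast [hg]; ring
    rw [heq, abs_of_pos (by linarith)]
    have : g < δ := by rw [abs_of_pos hpos] at hgδ; exact hgδ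
    linarith

/-- A positive Bohr element with prescribed sign of the signed fractional part. -/
lemma bohr_sign {α : ℝ} (hirr : Irrational α) {δ : ℝ} (hδ : 0 < δ) (hδ2 : δ < 1/2)
    (sgn : Bool) :
    ∃ q : ℤ, 0 < q ∧ (if sgn then 0 < α * q - round (α * q) ∧ α * q - round (α * q) < δ
      else -δ < α * q - round (α * q) ∧ α * q - round (α * q) < 0) := by
  rcases sgn with _ | _
  · obtain ⟨j, z, hj, hjz⟩ := forward_dense hirr (-(δ/2)) (by positivity : (0:ℝ) < δ/2)
      (by linarith)
    rcases abs_lt.mp hjz with ⟨h1, h2⟩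
    have hround : round (α * j) = z := by
      apply round_eq_of_abs_lt
      rw [abs_lt]
      constructor <;> [nlinarith; nlinarith]
    refine ⟨j, hj, ?_⟩
    simp only [if_false, Bool.false_eq_true]
    rw [hround]
    constructor <;> nlinarith
  · obtain ⟨j, z, hj, hjz⟩ := forward_dense hirr (δ/2) (by positivity : (0:ℝ) < δ/2)
      (by linarith)
    rcases abs_lt.mp hjz with ⟨h1, h2⟩
    have hround : round (α * j) = z := by
      apply round_eq_of_abs_lt
      rw [abs_lt]
      constructor <;> [nlinarith; nlinarith]
    refine ⟨j, hj, ?_⟩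
    simp only [if_true]
    rw [hround]
    constructor <;> nlinarith

/-- Bohr elements realizing arbitrary residues of `(q, round (α q))` mod `M`. -/
lemma bohr_residues {α : ℝ} (hirr : Irrational α) {δ : ℝ} (hδ : 0 < δ) (hδ2 : δ < 1/2)
    {M : ℤ} (hM : 0 < M) (r s : ℤ) :
    ∃ q : ℤ, 0 < q ∧ |α * q - round (α * q)| < δ ∧ (M ∣ q - r) ∧ M ∣ (round (α * q) - s) := by
  set r₀ : ℤ := r % M with hr₀
  have hr₀0 : 0 ≤ r₀ := Int.emod_nonneg r (ne_of_gt hM)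
  have hMr : M ∣ r - r₀ := Int.dvd_self_sub_of_emod_eq rfl
  obtain ⟨j, w, hj, hjw⟩ := forward_dense hirr ((s - α * r₀)/M) (by positivity : (0:ℝ) < δ/M)
    (by
      rw [div_le_one (by exact_mod_cast hM)]
      have : (1:ℝ) ≤ M := by exact_mod_cast hM
      linarith)
  set q : ℤ := r₀ + M * j with hq
  have hqpos : 0 < q := by positivity
  have key : |α * q - ((s + M * w : ℤ):ℝ)| < δ := by
    have hM0 : (M:ℝ) ≠ 0 := by exact_mod_cast ne_of_gt hM
    have expand : α * q - ((s + M * w : ℤ):ℝ) = M * ((j:ℝ) * α - (s - α * r₀)/M - w) := by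
      push_cast [hq]
      field_simp
      ring
    rw [expand, abs_mul, abs_of_pos (by exact_mod_cast hM : (0:ℝ) < M)]
    calc (M:ℝ) * |(j:ℝ)*α - (s - α*r₀)/M - w| < M * (δ/M) := by
          apply mul_lt_mul_of_pos_left hjw (by exact_mod_cast hM)
      _ = δ := by field_simp
  have hround : round (α * q) = s + M * w := round_eq_of_abs_lt (lt_trans key hδ2)
  refine ⟨q, hqpos, ?_, ?_, ?_⟩
  · rw [hround]; exact key
  · obtain ⟨c, hc⟩ := hMr
    refine ⟨j - c, ?_⟩
    have hr : r = r₀ + M * c := by linarith [hc]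
    rw [hq, hr]; ring
  · rw [hround]; exact ⟨w, by ring⟩

/-- E1 : additivity of rounding data along nonnegative combinations with
opposite-sign fractional parts. Whole-cast form. -/
lemma additive_bound {α γ δ τ : ℝ} (hδ : 0 < δ) (hδ8 : δ ≤ 1/8) (hτ : 0 < τ) (hτ8 : τ ≤ 1/8)
    (hP : ∀ m : ℤ, 0 < m → |α * m - round (α * m)| ≤ δ → |γ * m - round (γ * m)| ≤ τ)
    (q q' : ℤ) (hq : 0 < q) (hq' : 0 < q')
    (hbq : |α * q - round (α * q)| ≤ δ) (hbq' : |α * q' - round (α * q')| ≤ δ)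
    (hsq : 0 < α * q - round (α * q)) (hsq' : α * q' - round (α * q') < 0) :
    ∀ x x' : ℕ, 1 ≤ x + x' →
      |(x:ℝ) * (α * q - round (α * q)) + (x':ℝ) * (α * q' - round (α * q'))| ≤ δ →
      |γ * ((((x:ℤ) * q + (x':ℤ) * q' : ℤ)):ℝ) -
        ((((x:ℤ) * round (γ * q) + (x':ℤ) * round (γ * q') : ℤ)):ℝ)| ≤ τ := by
  set θ1 : ℝ := α * q - round (α * q) with hθ1
  set θ2 : ℝ := α * q' - round (α * q') with hθ2
  set a1 : ℤ := round (α * q) with ha1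
  set a2 : ℤ := round (α * q') with ha2
  set b1 : ℤ := round (γ * q) with hb1
  set b2 : ℤ := round (γ * q') with hb2
  have hmpos : ∀ x x' : ℕ, 1 ≤ x + x' → 0 < (x:ℤ) * q + (x':ℤ) * q' := by
    intro x x' hxx
    have : 1 ≤ x ∨ 1 ≤ x' := by omega
    rcases this with hx | hx
    · have h1 : q ≤ (x:ℤ) * q := le_mul_of_one_le_left hq.le (by exact_mod_cast hx)
      have h2 : (0:ℤ) ≤ (x':ℤ) * q' := mul_nonneg (by positivity) hq'.le
      linarith
    · have h1 : q' ≤ (x':ℤ) * q' := le_mul_of_one_le_left hq'.le (by exact_mod_cast hx)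
      have h2 : (0:ℤ) ≤ (x:ℤ) * q := mul_nonneg (by positivity) hq.le
      linarith
  have hbohr : ∀ x x' : ℕ, |(x:ℝ) * θ1 + (x':ℝ) * θ2| ≤ δ →
      |α * ((((x:ℤ) * q + (x':ℤ) * q' : ℤ)):ℝ) -
        round (α * ((((x:ℤ) * q + (x':ℤ) * q' : ℤ)):ℝ))| ≤ δ := by
    intro x x' hxx
    have heq : α * ((((x:ℤ) * q + (x':ℤ) * q' : ℤ)):ℝ) -
        ((((x:ℤ) * a1 + (x':ℤ) * a2 : ℤ)):ℝ) = (x:ℝ) * θ1 + (x':ℝ) * θ2 := by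
      rw [hθ1, hθ2]; push_cast; ring
    have hr : round (α * ((((x:ℤ) * q + (x':ℤ) * q' : ℤ)):ℝ)) = (x:ℤ) * a1 + (x':ℤ) * a2 :=
      round_eq_of_abs_lt (by rw [heq]; exact lt_of_le_of_lt hxx (by linarith))
    rw [hr, heq]
    exact hxx
  suffices H : ∀ s x x' : ℕ, x + x' = s → 1 ≤ x + x' →
      |(x:ℝ) * θ1 + (x':ℝ) * θ2| ≤ δ →
      |γ * ((((x:ℤ) * q + (x':ℤ) * q' : ℤ)):ℝ) - ((((x:ℤ) * b1 + (x':ℤ) * b2 : ℤ)):ℝ)| ≤ τ by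
    intro x x' h1 h2
    exact H (x + x') x x' rfl h1 h2
  intro s
  induction s using Nat.strong_induction_on with
  | _ s IH =>
    intro x x' hs hxx h2
    rcases eq_or_lt_of_le hxx with hs1 | hs2
    · -- base case x + x' = 1
      have hbase : (x = 1 ∧ x' = 0) ∨ (x = 0 ∧ x' = 1) := by omega
      rcases hbase with ⟨rfl, rfl⟩ | ⟨rfl, rfl⟩
      · simpa using hP q hq hbq
      · simpa using hP q' hq' hbq'
    · -- inductive step, x + x' ≥ 2
      have hθ1δ : θ1 ≤ δ := le_trans (le_abs_self _) hbq
      have hθ2δ : -δ ≤ θ2 := by linarith [abs_le.mp hbq' |>.1]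
      have habs := abs_le.mp h2
      by_cases hT : 0 ≤ (x:ℝ) * θ1 + (x':ℝ) * θ2
      · -- peel off one copy of q
        have hx1 : 1 ≤ x := by
          by_contra hx0
          have hx0' : x = 0 := by omega
          have hx'1 : 1 ≤ x' := by omega
          have hneg : (x':ℝ) * θ2 ≤ 1 * θ2 :=
            mul_le_mul_of_nonpos_right (by exact_mod_cast hx'1) hsq'.le
          rw [hx0'] at hT
          push_cast at hT
          linarith
        have hcZ : ((x-1 : ℕ):ℤ) = (x:ℤ) - 1 := by push_cast [Nat.cast_sub hx1]; ring
        have hcR : ((x-1 : ℕ):ℝ) = (x:ℝ) - 1 := by push_cast [Nat.cast_sub hx1]; ring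
        have hpred : |((x-1 : ℕ):ℝ) * θ1 + (x':ℝ) * θ2| ≤ δ := by
          rw [hcR, abs_le]
          constructor
          · nlinarith
          · nlinarith
        have hIH := IH (s-1) (by omega) (x-1) x' (by omega) (by omega) hpred
        have hsplit : γ * ((((x:ℤ) * q + (x':ℤ) * q' : ℤ)):ℝ) -
            ((((x:ℤ) * b1 + (x':ℤ) * b2 : ℤ)):ℝ) =
            (γ * (((((x-1:ℕ):ℤ) * q + (x':ℤ) * q' : ℤ)):ℝ) -
              (((((x-1:ℕ):ℤ) * b1 + (x':ℤ) * b2 : ℤ)):ℝ)) + (γ * q - b1) := by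
          rw [hcZ]; push_cast; ring
        have hquarter : |γ * ((((x:ℤ) * q + (x':ℤ) * q' : ℤ)):ℝ) -
            ((((x:ℤ) * b1 + (x':ℤ) * b2 : ℤ)):ℝ)| ≤ 2 * τ := by
          rw [hsplit]
          calc _ ≤ |γ * (((((x-1:ℕ):ℤ) * q + (x':ℤ) * q' : ℤ)):ℝ) -
                (((((x-1:ℕ):ℤ) * b1 + (x':ℤ) * b2 : ℤ)):ℝ)| + |γ * q - b1| := abs_add_le _ _
            _ ≤ τ + τ := add_le_add hIH (hP q hq hbq)
            _ = 2 * τ := by ring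
        have hround : round (γ * ((((x:ℤ) * q + (x':ℤ) * q' : ℤ)):ℝ)) =
            (x:ℤ) * b1 + (x':ℤ) * b2 :=
          round_eq_of_abs_lt (lt_of_le_of_lt hquarter (by linarith))
        have hfin := hP ((x:ℤ) * q + (x':ℤ) * q') (hmpos x x' (by omega)) (hbohr x x' h2)
        rw [hround] at hfin
        exact hfin
      · -- peel off one copy of q'
        push_neg at hT
        have hx1 : 1 ≤ x' := by
          by_contra hx0
          have hx0' : x' = 0 := by omega
          have hx'1 : 1 ≤ x := by omega
          have hpos : (0:ℝ) ≤ (x:ℝ) * θ1 := mul_nonneg (by positivity) hsq.le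
          rw [hx0'] at hT
          push_cast at hT
          linarith
        have hcZ : ((x'-1 : ℕ):ℤ) = (x':ℤ) - 1 := by push_cast [Nat.cast_sub hx1]; ring
        have hcR : ((x'-1 : ℕ):ℝ) = (x':ℝ) - 1 := by push_cast [Nat.cast_sub hx1]; ring
        have hpred : |(x:ℝ) * θ1 + ((x'-1 : ℕ):ℝ) * θ2| ≤ δ := by
          rw [hcR, abs_le]
          constructor
          · nlinarith
          · nlinarith
        have hIH := IH (s-1) (by omega) x (x'-1) (by omega) (by omega) hpred
        have hsplit : γ * ((((x:ℤ) * q + (x':ℤ) * q' : ℤ)):ℝ) -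
            ((((x:ℤ) * b1 + (x':ℤ) * b2 : ℤ)):ℝ) =
            (γ * ((((x:ℤ) * q + ((x'-1:ℕ):ℤ) * q' : ℤ)):ℝ) -
              ((((x:ℤ) * b1 + ((x'-1:ℕ):ℤ) * b2 : ℤ)):ℝ)) + (γ * q' - b2) := by
          rw [hcZ]; push_cast; ring
        have hquarter : |γ * ((((x:ℤ) * q + (x':ℤ) * q' : ℤ)):ℝ) -
            ((((x:ℤ) * b1 + (x':ℤ) * b2 : ℤ)):ℝ)| ≤ 2 * τ := by
          rw [hsplit]
          calc _ ≤ |γ * ((((x:ℤ) * q + ((x'-1:ℕ):ℤ) * q' : ℤ)):ℝ) -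
                ((((x:ℤ) * b1 + ((x'-1:ℕ):ℤ) * b2 : ℤ)):ℝ)| + |γ * q' - b2| := abs_add_le _ _
            _ ≤ τ + τ := add_le_add hIH (hP q' hq' hbq')
            _ = 2 * τ := by ring
        have hround : round (γ * ((((x:ℤ) * q + (x':ℤ) * q' : ℤ)):ℝ)) =
            (x:ℤ) * b1 + (x':ℤ) * b2 :=
          round_eq_of_abs_lt (lt_of_le_of_lt hquarter (by linarith))
        have hfin := hP ((x:ℤ) * q + (x':ℤ) * q') (hmpos x x' (by omega)) (hbohr x x' h2)
        rw [hround] at hfin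
        exact hfin

/-- E2: the exact proportionality identity for an opposite-sign pair. -/
lemma ratio_eq {α γ δ τ : ℝ} (hδ : 0 < δ) (hδ8 : δ ≤ 1/8) (hτ : 0 < τ) (hτ8 : τ ≤ 1/8)
    (hP : ∀ m : ℤ, 0 < m → |α * m - round (α * m)| ≤ δ → |γ * m - round (γ * m)| ≤ τ)
    (q q' : ℤ) (hq : 0 < q) (hq' : 0 < q')
    (hbq : |α * q - round (α * q)| ≤ δ) (hbq' : |α * q' - round (α * q')| ≤ δ)
    (hsq : 0 < α * q - round (α * q)) (hsq' : α * q' - round (α * q') < 0) :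
    (γ * q - round (γ * q)) * (α * q' - round (α * q')) =
      (γ * q' - round (γ * q')) * (α * q - round (α * q)) := by
  set θ1 : ℝ := α * q - round (α * q) with hθ1
  set θ2 : ℝ := α * q' - round (α * q') with hθ2
  set ψ1 : ℝ := γ * q - round (γ * q) with hψ1
  set ψ2 : ℝ := γ * q' - round (γ * q') with hψ2
  have hψ1τ : |ψ1| ≤ τ := hP q hq hbq
  have hc : ∀ X : ℕ, 1 ≤ X → (X:ℝ) * |ψ1 * θ2 - ψ2 * θ1| ≤ 2 * τ * θ1 := by
    intro X hX
    set z : ℝ := (X:ℝ) * (-θ2) / θ1 with hz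
    have hz0 : 0 ≤ z := by
      apply div_nonneg _ hsq.le
      have : 0 ≤ (X:ℝ) := by positivity
      nlinarith
    set x : ℕ := ⌊z⌋₊ + 1 with hx
    have hx2 : z < (x:ℝ) := by
      rw [hx]; push_cast; exact Nat.lt_floor_add_one z
    have hx1 : (x:ℝ) ≤ z + 1 := by
      rw [hx]; push_cast; linarith [Nat.floor_le hz0]
    have hzθ : z * θ1 = (X:ℝ) * (-θ2) := by
      rw [hz]; field_simp
    have htot : (x:ℝ) * θ1 + (X:ℝ) * θ2 = ((x:ℝ) - z) * θ1 := by
      rw [sub_mul, hzθ]; ring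
    have htotpos : 0 < (x:ℝ) * θ1 + (X:ℝ) * θ2 := by
      rw [htot]; exact mul_pos (by linarith) hsq
    have htotle : (x:ℝ) * θ1 + (X:ℝ) * θ2 ≤ θ1 := by
      rw [htot]; nlinarith
    have hθ1δ : θ1 ≤ δ := le_trans (le_abs_self _) hbq
    have hbnd : |(x:ℝ) * θ1 + (X:ℝ) * θ2| ≤ δ := by
      rw [abs_of_pos htotpos]; linarith
    have hE := additive_bound hδ hδ8 hτ hτ8 hP q q' hq hq' hbq hbq' hsq hsq' x X
      (by omega) hbnd
    have hexp : γ * ((((x:ℤ) * q + (X:ℤ) * q' : ℤ)):ℝ) -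
        ((((x:ℤ) * round (γ * q) + (X:ℤ) * round (γ * q') : ℤ)):ℝ) =
        (x:ℝ) * ψ1 + (X:ℝ) * ψ2 := by
      rw [hψ1, hψ2]; push_cast; ring
    rw [hexp] at hE
    have hkey : (X:ℝ) * (ψ1 * θ2 - ψ2 * θ1) =
        ((x:ℝ) - z) * ψ1 * θ1 - θ1 * ((x:ℝ) * ψ1 + (X:ℝ) * ψ2) := by
      linear_combination ψ1 * hzθ
    have hxz : |(x:ℝ) - z| ≤ 1 := by rw [abs_le]; constructor <;> linarith
    have hmm : |(x:ℝ) - z| * |ψ1| ≤ τ := by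
      have h4 := mul_le_mul hxz hψ1τ (abs_nonneg ψ1) (by norm_num : (0:ℝ) ≤ 1)
      linarith
    have h2 : |((x:ℝ) - z) * ψ1 * θ1| ≤ τ * θ1 := by
      rw [abs_mul, abs_of_pos hsq, abs_mul]
      exact mul_le_mul_of_nonneg_right hmm hsq.le
    have h3 : |θ1 * ((x:ℝ) * ψ1 + (X:ℝ) * ψ2)| ≤ θ1 * τ := by
      rw [abs_mul, abs_of_pos hsq]
      exact mul_le_mul_of_nonneg_left hE hsq.le
    calc (X:ℝ) * |ψ1 * θ2 - ψ2 * θ1| = |(X:ℝ) * (ψ1 * θ2 - ψ2 * θ1)| := by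
          rw [abs_mul, abs_of_nonneg (by positivity : (0:ℝ) ≤ (X:ℝ))]
      _ ≤ |((x:ℝ) - z) * ψ1 * θ1| + |θ1 * ((x:ℝ) * ψ1 + (X:ℝ) * ψ2)| := by
          rw [hkey]; exact abs_sub _ _
      _ ≤ τ * θ1 + θ1 * τ := add_le_add h2 h3
      _ = 2 * τ * θ1 := by ring
  have hzero : ψ1 * θ2 - ψ2 * θ1 = 0 := by
    by_contra h0
    have habs0 : 0 < |ψ1 * θ2 - ψ2 * θ1| := abs_pos.mpr h0
    obtain ⟨X, hXgt⟩ := exists_nat_gt (2 * τ * θ1 / |ψ1 * θ2 - ψ2 * θ1|)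
    have hX1 : 1 ≤ X := by
      by_contra hX0
      have hX00 : X = 0 := by omega
      rw [hX00] at hXgt
      simp at hXgt
      have : 0 < 2 * τ * θ1 / |ψ1 * θ2 - ψ2 * θ1| := by positivity
      linarith
    have h1 := hc X hX1
    rw [div_lt_iff₀ habs0] at hXgt
    linarith
  linarith [hzero]

/-- θ_m is nonzero for irrational α and m > 0. -/
lemma theta_ne {α : ℝ} (hirr : Irrational α) {m : ℤ} (hm : m ≠ 0) :
    α * m - round (α * m) ≠ 0 := by
  have h1 : Irrational (α * m) := by
    rw [mul_comm]
    exact hirr.intCast_mul hm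
  intro h0
  exact (h1.ne_int (round (α * m))) (by linarith)

/-- KEY RIGIDITY LEMMA: if ‖γ q‖ is uniformly small on Bohr sets of α,
then γ ∈ ℤ + ℤ α. -/
theorem keyE {α γ : ℝ} (hirr : Irrational α)
    (P : ∀ τ : ℝ, 0 < τ → ∃ ε : ℝ, 0 < ε ∧ ∀ q : ℤ, 0 < q →
      |α * q - round (α * q)| < ε → |γ * q - round (γ * q)| ≤ τ) :
    ∃ e f : ℤ, γ = e + f * α := by
  obtain ⟨ε, hε, hPε⟩ := P (1/8) (by norm_num)
  have hδ : 0 < min (ε/2) (1/8) := lt_min (by positivity) (by norm_num)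
  set δ : ℝ := min (ε/2) (1/8) with hδdef
  have hδ8 : δ ≤ 1/8 := min_le_right _ _
  have hδhalf : δ < 1/2 := lt_of_le_of_lt hδ8 (by norm_num)
  have hδε : δ < ε := lt_of_le_of_lt (min_le_left _ _) (by linarith)
  have hP : ∀ m : ℤ, 0 < m → |α * m - round (α * m)| ≤ δ →
      |γ * m - round (γ * m)| ≤ 1/8 := fun m hm hb => hPε m hm (lt_of_le_of_lt hb hδε)
  -- opposite-sign Bohr elements
  obtain ⟨qp, hqp, hqps⟩ := bohr_sign hirr hδ hδhalf true
  obtain ⟨qm, hqm, hqms⟩ := bohr_sign hirr hδ hδhalf false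
  simp only [if_true] at hqps
  simp only [Bool.false_eq_true, if_false] at hqms
  have hbp : |α * qp - round (α * qp)| ≤ δ := by
    rw [abs_of_pos hqps.1]; exact hqps.2.le
  have hbm : |α * qm - round (α * qm)| ≤ δ := by
    rw [abs_of_neg hqms.2]; linarith [hqms.1]
  -- cross identity for all positive Bohr m : ψm θ1 = ψ1 θm
  have hcross : ∀ m : ℤ, 0 < m → |α * m - round (α * m)| ≤ δ →
      (γ * m - round (γ * m)) * (α * qp - round (α * qp)) =
        (γ * qp - round (γ * qp)) * (α * m - round (α * m)) := by
    intro m hm hbmm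
    rcases lt_trichotomy (α * m - round (α * m)) 0 with hneg | hzero | hpos
    · exact (ratio_eq hδ hδ8 (by norm_num) (le_refl (1/8)) hP qp m hqp hm hbp hbmm
        hqps.1 hneg).symm
    · exact absurd hzero (theta_ne hirr (ne_of_gt hm))
    · have h1 := ratio_eq hδ hδ8 (by norm_num) (le_refl (1/8)) hP m qm hm hqm hbmm hbm
        hpos hqms.2
      have h2 := ratio_eq hδ hδ8 (by norm_num) (le_refl (1/8)) hP qp qm hqp hqm hbp hbm
        hqps.1 hqms.2
      have hθqm : α * qm - round (α * qm) ≠ 0 := theta_ne hirr (ne_of_gt hqm)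
      apply mul_right_cancel₀ hθqm
      linear_combination (α * qp - round (α * qp)) * h1 - (α * m - round (α * m)) * h2
  -- a second Bohr element with non-proportional rounding data
  obtain ⟨q2, hq2, hb2q, hD⟩ :
      ∃ q2 : ℤ, 0 < q2 ∧ |α * q2 - round (α * q2)| ≤ δ ∧
        q2 * round (α * qp) - qp * round (α * q2) ≠ 0 := by
    have hqpR : (0:ℝ) < qp := by exact_mod_cast hqp
    have hθ1pos : 0 < α * qp - round (α * qp) := hqps.1
    have hδBpos : 0 < min δ ((α * qp - round (α * qp)) / (2 * ((qp:ℝ) + 1))) :=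
      lt_min hδ (by positivity)
    obtain ⟨q2, hq2, hq2s⟩ := bohr_sign hirr hδBpos
      (lt_of_le_of_lt (min_le_left _ _) hδhalf) true
    simp only [if_true] at hq2s
    have hminle : min δ ((α * qp - round (α * qp)) / (2 * ((qp:ℝ) + 1))) ≤ δ :=
      min_le_left _ _
    refine ⟨q2, hq2, by rw [abs_of_pos hq2s.1]; linarith [hq2s.2, hminle], ?_⟩
    intro hzero
    have hzR : (q2:ℝ) * round (α * qp) = (qp:ℝ) * round (α * q2) := by
      have : ((q2 * round (α * qp) : ℤ):ℝ) = ((qp * round (α * q2) : ℤ):ℝ) := by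
        exact_mod_cast congrArg (Int.cast : ℤ → ℝ) (by linarith [hzero] :
          q2 * round (α * qp) = qp * round (α * q2))
      push_cast at this
      linarith [this]
    have hrel : (α * q2 - round (α * q2)) * qp = (α * qp - round (α * qp)) * q2 := by
      linear_combination hzR
    have hq2R : (1:ℝ) ≤ q2 := by exact_mod_cast hq2
    have h5 : α * q2 - round (α * q2) < (α * qp - round (α * qp)) / (2 * ((qp:ℝ) + 1)) :=
      lt_of_lt_of_le hq2s.2 (min_le_right _ _)
    have h6 : (α * q2 - round (α * q2)) * qp <
        ((α * qp - round (α * qp)) / (2 * ((qp:ℝ) + 1))) * qp :=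
      mul_lt_mul_of_pos_right h5 hqpR
    have h7 : ((α * qp - round (α * qp)) / (2 * ((qp:ℝ) + 1))) * qp ≤
        (α * qp - round (α * qp)) / 2 := by
      rw [div_mul_eq_mul_div, div_le_div_iff₀ (by positivity) (by norm_num)]
      nlinarith
    have hbig : (α * qp - round (α * qp)) ≤ (α * qp - round (α * qp)) * q2 :=
      le_mul_of_one_le_right hθ1pos.le hq2R
    nlinarith
  have hθ1pos : 0 < α * qp - round (α * qp) := hqps.1
  have h22 := hcross q2 hq2 hb2q
  -- hB2 : θ1 * Nn = ψ1 * Dd  (expanded)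
  have hB2 : (α * qp - round (α * qp)) * ((q2:ℝ) * round (γ * qp) - (qp:ℝ) * round (γ * q2)) =
      (γ * qp - round (γ * qp)) * ((q2:ℝ) * round (α * qp) - (qp:ℝ) * round (α * q2)) := by
    linear_combination ((qp:ℝ)) * h22
  -- master identity over ℤ
  have hmaster : ∀ m : ℤ, 0 < m → |α * m - round (α * m)| ≤ δ →
      (round (γ * qp) * (q2 * round (α * qp) - qp * round (α * q2)) -
        (q2 * round (γ * qp) - qp * round (γ * q2)) * round (α * qp)) * m +
      ((q2 * round (γ * qp) - qp * round (γ * q2)) * qp) * round (α * m) =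
      (qp * (q2 * round (α * qp) - qp * round (α * q2))) * round (γ * m) := by
    intro m hm hbmm
    have hm1 := hcross m hm hbmm
    have hBm : (α * qp - round (α * qp)) * ((qp:ℝ) * round (γ * m) - (m:ℝ) * round (γ * qp)) =
        (γ * qp - round (γ * qp)) * ((qp:ℝ) * round (α * m) - (m:ℝ) * round (α * qp)) := by
      linear_combination (-(qp:ℝ)) * hm1
    have htgt : (((round (γ * qp) * (q2 * round (α * qp) - qp * round (α * q2)) -
        (q2 * round (γ * qp) - qp * round (γ * q2)) * round (α * qp)) * m +
        ((q2 * round (γ * qp) - qp * round (γ * q2)) * qp) * round (α * m) -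
        (qp * (q2 * round (α * qp) - qp * round (α * q2))) * round (γ * m) : ℤ):ℝ) *
        (α * qp - round (α * qp)) = 0 := by
      push_cast
      linear_combination (-((q2:ℝ) * round (α * qp) - (qp:ℝ) * round (α * q2))) * hBm +
        ((qp:ℝ) * round (α * m) - (m:ℝ) * round (α * qp)) * hB2
    rcases mul_eq_zero.mp htgt with h | h
    · have h0 : ((round (γ * qp) * (q2 * round (α * qp) - qp * round (α * q2)) -
        (q2 * round (γ * qp) - qp * round (γ * q2)) * round (α * qp)) * m +
        ((q2 * round (γ * qp) - qp * round (γ * q2)) * qp) * round (α * m) -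
        (qp * (q2 * round (α * qp) - qp * round (α * q2))) * round (γ * m) : ℤ) = 0 := by
        exact_mod_cast h
      linarith [h0]
    · exact absurd h (ne_of_gt hθ1pos)
  -- now name the integer constants
  set e₀ : ℤ := round (γ * qp) * (q2 * round (α * qp) - qp * round (α * q2)) -
      (q2 * round (γ * qp) - qp * round (γ * q2)) * round (α * qp) with he₀
  set f₀ : ℤ := (q2 * round (γ * qp) - qp * round (γ * q2)) * qp with hf₀
  set k : ℤ := qp * (q2 * round (α * qp) - qp * round (α * q2)) with hk
  have hk0 : k ≠ 0 := mul_ne_zero (ne_of_gt hqp) hD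
  have hkR : ((k:ℤ):ℝ) ≠ 0 := by exact_mod_cast hk0
  have hkabs : 0 < |k| := abs_pos.mpr hk0
  have hdvde : k ∣ e₀ := by
    obtain ⟨q, hq, hbq, hd1, hd2⟩ := bohr_residues hirr hδ hδhalf hkabs 1 0
    have hmq := hmaster q hq hbq.le
    have h1 : k ∣ e₀ * q + f₀ * round (α * q) := ⟨round (γ * q), by linarith [hmq]⟩
    have h2 : k ∣ q - 1 := (abs_dvd _ _).mp hd1
    have h3 : k ∣ round (α * q) := by
      have := (abs_dvd _ _).mp hd2
      simpa using this
    have hsplit : e₀ = (e₀ * q + f₀ * round (α * q)) - e₀ * (q - 1) - f₀ * round (α * q) := by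
      ring
    rw [hsplit]
    exact dvd_sub (dvd_sub h1 (Dvd.dvd.mul_left h2 e₀)) (Dvd.dvd.mul_left h3 f₀)
  have hdvdf : k ∣ f₀ := by
    obtain ⟨q, hq, hbq, hd1, hd2⟩ := bohr_residues hirr hδ hδhalf hkabs 0 1
    have hmq := hmaster q hq hbq.le
    have h1 : k ∣ e₀ * q + f₀ * round (α * q) := ⟨round (γ * q), by linarith [hmq]⟩
    have h2 : k ∣ q := by
      have := (abs_dvd _ _).mp hd1
      simpa using this
    have h3 : k ∣ round (α * q) - 1 := (abs_dvd _ _).mp hd2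
    have hsplit : f₀ = (e₀ * q + f₀ * round (α * q)) - f₀ * (round (α * q) - 1) - e₀ * q := by
      ring
    rw [hsplit]
    exact dvd_sub (dvd_sub h1 (Dvd.dvd.mul_left h3 f₀)) (Dvd.dvd.mul_left h2 e₀)
  obtain ⟨e, he⟩ := hdvde
  obtain ⟨f, hf⟩ := hdvdf
  refine ⟨e, f, ?_⟩
  have hkγ : (k:ℝ) * γ = (e₀:ℝ) + (f₀:ℝ) * α := by
    rw [hk, he₀, hf₀]
    push_cast
    linear_combination (-1:ℝ) * hB2
  have hfin : (k:ℝ) * γ = (k:ℝ) * ((e:ℝ) + (f:ℝ) * α) := by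
    rw [hkγ, he, hf]
    push_cast
    ring
  exact mul_left_cancel₀ hkR hfin

lemma abs_sub_abs3 (a b c : ℝ) : |a - b - c| ≤ |a| + |b| + |c| := by
  calc |a - b - c| ≤ |a - b| + |c| := abs_sub _ _
    _ ≤ |a| + |b| + |c| := by linarith [abs_sub a b]

/-- Step B : local linear approximation of `Δo g`. -/
lemma stepB {α β : ℝ} (hβ : 0 < β) (g : ℤ → ℤ)
    (hg : ∀ n : ℤ, g n = round (β * n * round (α * n))) (N m : ℤ) (hN : 0 < N) (hm : 0 < m)
    (hsmall : |α * m - round (α * m)| < 1/2 - |α * N - round (α * N)|) :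
    |((Δo g N m : ℤ):ℝ) - β * m * (α * N + round (α * N))| ≤
      3/2 + β * N * |α * m - round (α * m)| := by
  have hg0 : g 0 = 0 := by rw [hg]; norm_num
  have hround : round (α * ((N + m : ℤ):ℝ)) = round (α * N) + round (α * m) := by
    apply round_eq_of_abs_lt
    have heq : α * ((N + m : ℤ):ℝ) - ((round (α * N) + round (α * m) : ℤ):ℝ) =
        (α * N - round (α * N)) + (α * m - round (α * m)) := by push_cast; ring
    rw [heq]
    calc |(α * N - round (α * N)) + (α * m - round (α * m))| ≤
        |α * N - round (α * N)| + |α * m - round (α * m)| := abs_add_le _ _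
      _ < 1/2 := by linarith
  have hΔ : ((Δo g N m : ℤ):ℝ) =
      ((round (β * ((N + m : ℤ):ℝ) * ((round (α * N) + round (α * m) : ℤ):ℝ)) : ℤ):ℝ) -
      ((round (β * N * round (α * N)) : ℤ):ℝ) - ((round (β * m * round (α * m)) : ℤ):ℝ) := by
    simp only [Δo, hg0, add_zero]
    rw [hg (N + m), hg N, hg m, hround]
    push_cast
    ring
  have h1 := abs_sub_round (β * ((N + m : ℤ):ℝ) * ((round (α * N) + round (α * m) : ℤ):ℝ))
  have h2 := abs_sub_round (β * N * ((round (α * N) : ℤ):ℝ))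
  have h3 := abs_sub_round (β * m * ((round (α * m) : ℤ):ℝ))
  have hS : β * ((N + m : ℤ):ℝ) * ((round (α * N) + round (α * m) : ℤ):ℝ) -
      β * N * ((round (α * N) : ℤ):ℝ) - β * m * ((round (α * m) : ℤ):ℝ) -
      β * m * (α * N + round (α * N)) =
      -(β * N * (α * m - round (α * m))) := by push_cast; ring
  have hβN : (0:ℝ) ≤ β * N := by positivity
  have h5 : β * (N:ℝ) * (α * m - round (α * m)) ≤ β * N * |α * m - round (α * m)| :=
    mul_le_mul_of_nonneg_left (le_abs_self _) hβN
  have h6 : β * (N:ℝ) * (-(|α * m - round (α * m)|)) ≤ β * N * (α * m - round (α * m)) :=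
    mul_le_mul_of_nonneg_left (neg_abs_le _) hβN
  rw [hΔ, abs_le]
  rcases abs_le.mp h1 with ⟨h1a, h1b⟩
  rcases abs_le.mp h2 with ⟨h2a, h2b⟩
  rcases abs_le.mp h3 with ⟨h3a, h3b⟩
  constructor <;> nlinarith [hS, h5, h6]

theorem divisibility (α β : ℝ) (hα : 0 < α) (hβ : 0 < β)
    (hind : LinearIndependent ℚ ![(1 : ℝ), α, α ^ 2])
    (hβ' : (∃ b : ℤ, β = (b : ℝ)) ∨ Irrational β)
    (g : ℤ → ℤ) (hg : ∀ n : ℤ, g n = round (β * n * round (α * n)))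
    (n n' h : ℤ) (hn : 0 < n) (hn' : 0 < n') (hh : 1 ≤ h)
    (hyp : ∀ ε' : ℝ, 0 < ε' → ∃ ε : ℝ, 0 < ε ∧ ∀ m : ℤ, 0 < m →
      |α * m - round (α * m)| < ε → ∃ m' : ℤ, 0 < m' ∧
        |α * m' - round (α * m')| < ε' ∧ |Δo g n m' - Δo g n' m| ≤ h) :
    ∃ t : ℤ, 0 < t ∧ n' = t * n ∧ round (α * n') = t * round (α * n) := by
  -- irrationality of α
  have hirr : Irrational α := by
    intro hmem
    obtain ⟨r, hr⟩ := hmem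
    have hsum : ∑ i, (![(-r : ℚ), 1, 0]) i • (![(1 : ℝ), α, α ^ 2]) i = 0 := by
      simp [Fin.sum_univ_three, Rat.smul_def]
      push_cast
      linarith [hr]
    have := Fintype.linearIndependent_iff.mp hind ![(-r : ℚ), 1, 0] hsum 1
    norm_num at this
  have hnR : (0:ℝ) < n := by exact_mod_cast hn
  have hn'R : (0:ℝ) < n' := by exact_mod_cast hn'
  have hhR : (1:ℝ) ≤ h := by exact_mod_cast hh
  have hirr_n : Irrational (α * n) := by
    rw [mul_comm]; exact hirr.intCast_mul (ne_of_gt hn)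
  have hirr_n' : Irrational (α * n') := by
    rw [mul_comm]; exact hirr.intCast_mul (ne_of_gt hn')
  have hκn : 0 < 1/2 - |α * n - round (α * n)| := by
    linarith [abs_sub_round_lt_half hirr_n]
  have hκn' : 0 < 1/2 - |α * n' - round (α * n')| := by
    linarith [abs_sub_round_lt_half hirr_n']
  set κ : ℝ := min (1/2 - |α * n - round (α * n)|) (1/2 - |α * n' - round (α * n')|) with hκdef
  have hκ : 0 < κ := lt_min hκn hκn'
  -- L and L'
  have hA : (0:ℝ) ≤ round (α * n) := by
    have : (0:ℤ) ≤ round (α * n) := by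
      rw [round_eq]
      apply Int.le_floor.mpr
      push_cast
      nlinarith
    exact_mod_cast this
  have hA' : (0:ℝ) ≤ round (α * n') := by
    have : (0:ℤ) ≤ round (α * n') := by
      rw [round_eq]
      apply Int.le_floor.mpr
      push_cast
      nlinarith
    exact_mod_cast this
  have hL : 0 < α * n + (round (α * n) : ℝ) := by nlinarith
  have hL' : 0 < α * n' + (round (α * n') : ℝ) := by nlinarith
  set L : ℝ := α * n + (round (α * n) : ℝ) with hLdef
  set L' : ℝ := α * n' + (round (α * n') : ℝ) with hL'def
  set C₁ : ℝ := ((h:ℝ) + 3 + β * n + β * n') / β with hC₁def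
  have hC₁ : 0 < C₁ := by
    rw [hC₁def]
    apply div_pos _ hβ
    nlinarith
  clear_value κ L L' C₁
  -- Step C
  have stepC : ∀ η : ℝ, 0 < η → η ≤ min (κ/2) 1 → ∃ ε : ℝ, 0 < ε ∧ ε ≤ min (κ/2) 1 ∧
      ∀ q : ℤ, 0 < q → |α * q - round (α * q)| < ε → ∃ u : ℤ, 0 < u ∧
        |α * u - round (α * u)| < η ∧ |(u:ℝ) * L - (q:ℝ) * L'| ≤ C₁ := by
    intro η hη hηle
    obtain ⟨ε, hε, hm⟩ := hyp η hη
    refine ⟨min ε (min (κ/2) 1), lt_min hε (lt_min (by linarith) one_pos), min_le_right _ _,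
      ?_⟩
    intro q hq hqb
    obtain ⟨u, hu, hub, hud⟩ := hm q hq (lt_of_lt_of_le hqb (min_le_left _ _))
    refine ⟨u, hu, hub, ?_⟩
    have hqb' : |α * q - round (α * q)| < min (κ/2) 1 :=
      lt_of_lt_of_le hqb (min_le_right _ _)
    have hB1 : |((Δo g n u : ℤ):ℝ) - β * u * L| ≤ 3/2 + β * n * |α * u - round (α * u)| := by
      rw [hLdef]
      apply stepB hβ g hg n u hn hu
      have : κ ≤ 1/2 - |α * n - round (α * n)| := by rw [hκdef]; exact min_le_left _ _
      have hη2 : η ≤ κ/2 := le_trans hηle (min_le_left _ _)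
      linarith [hub]
    have hB2 : |((Δo g n' q : ℤ):ℝ) - β * q * L'| ≤
        3/2 + β * n' * |α * q - round (α * q)| := by
      rw [hL'def]
      apply stepB hβ g hg n' q hn' hq
      have : κ ≤ 1/2 - |α * n' - round (α * n')| := by rw [hκdef]; exact min_le_right _ _
      have : |α * q - round (α * q)| < κ/2 := lt_of_lt_of_le hqb' (min_le_left _ _)
      linarith
    have hd : |((Δo g n u - Δo g n' q : ℤ):ℝ)| ≤ (h:ℝ) := by
      rw [← Int.cast_abs]
      exact_mod_cast hud
    have hb1 : β * n * |α * u - round (α * u)| ≤ β * n := by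
      have h1 : |α * u - round (α * u)| ≤ 1 := le_trans hub.le (le_trans hηle (min_le_right _ _))
      have := mul_le_mul_of_nonneg_left h1 (by positivity : (0:ℝ) ≤ β * n)
      linarith
    have hb2 : β * n' * |α * q - round (α * q)| ≤ β * n' := by
      have h1 : |α * q - round (α * q)| ≤ 1 := le_trans hqb'.le (min_le_right _ _)
      have := mul_le_mul_of_nonneg_left h1 (by positivity : (0:ℝ) ≤ β * n')
      linarith
    -- |β u L - β q L'| ≤ h + 3 + βn + βn'
    have hbig : |β * u * L - β * q * L'| ≤ (h:ℝ) + 3 + β * n + β * n' := by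
      have hcast : ((Δo g n u - Δo g n' q : ℤ):ℝ) =
          ((Δo g n u : ℤ):ℝ) - ((Δo g n' q : ℤ):ℝ) := by push_cast; ring
      rw [hcast] at hd
      rcases abs_le.mp hB1 with ⟨c1, c2⟩
      rcases abs_le.mp hB2 with ⟨c3, c4⟩
      rcases abs_le.mp hd with ⟨c5, c6⟩
      rw [abs_le]
      constructor <;> linarith
    have : β * u * L - β * q * L' = β * ((u:ℝ) * L - (q:ℝ) * L') := by ring
    rw [this, abs_mul, abs_of_pos hβ] at hbig
    rw [hC₁def, le_div_iff₀ hβ]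
    linarith [hbig]
  -- the Bohr gap constant
  set W : ℤ := ⌊3 * C₁ / L⌋ + 1 with hWdef
  have hW1 : 1 ≤ W := by
    have h0 : (0:ℝ) ≤ 3 * C₁ / L := by positivity
    have := Int.le_floor.mpr (by exact_mod_cast h0 : ((0:ℤ):ℝ) ≤ 3 * C₁ / L)
    omega
  have hζ : ∃ ζ : ℝ, 0 < ζ ∧ ζ ≤ 1 ∧ ∀ v : ℤ, v ≠ 0 → |v| ≤ W →
      ζ ≤ |α * v - round (α * v)| := by
    classical
    set S : Finset ℤ := (Finset.Icc (-W) W).erase 0 with hSdef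
    have hne : S.Nonempty := ⟨1, by
      rw [hSdef, Finset.mem_erase]
      exact ⟨one_ne_zero, Finset.mem_Icc.mpr ⟨by omega, hW1⟩⟩⟩
    set ζ0 : ℝ := S.inf' hne (fun v => |α * v - round (α * v)|) with hζ0def
    refine ⟨min ζ0 1, lt_min ?_ one_pos, min_le_right _ _, ?_⟩
    · rw [hζ0def, Finset.lt_inf'_iff]
      intro v hv
      rw [hSdef, Finset.mem_erase] at hv
      exact abs_pos.mpr (theta_ne hirr hv.1)
    · intro v hv hvW
      have hvS : v ∈ S := by
        rw [hSdef, Finset.mem_erase]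
        refine ⟨hv, Finset.mem_Icc.mpr ?_⟩
        rcases abs_le.mp hvW with ⟨r1, r2⟩
        omega
      calc min ζ0 1 ≤ ζ0 := min_le_left _ _
        _ ≤ |α * v - round (α * v)| := Finset.inf'_le _ hvS
  obtain ⟨ζ, hζpos, hζ1, hζmin⟩ := hζ
  -- fix the matching scale η*
  have hηstar : 0 < min (min (κ/2) 1) (ζ/4) := lt_min (lt_min (by linarith) one_pos) (by linarith)
  obtain ⟨ε₀, hε₀, hε₀le, hC⟩ := stepC (min (min (κ/2) 1) (ζ/4)) hηstar (min_le_left _ _)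
  -- Step D : the rigidity hypothesis for ρ = L'/L
  have P : ∀ τ : ℝ, 0 < τ → ∃ ε : ℝ, 0 < ε ∧ ∀ q : ℤ, 0 < q →
      |α * q - round (α * q)| < ε →
      |(L'/L) * q - round ((L'/L) * q)| ≤ τ := by
    intro τ hτ
    obtain ⟨N0, hN0⟩ := exists_nat_gt (C₁ / (L * τ))
    set N : ℕ := N0 + 1 with hNdef
    have hN1 : 1 ≤ N := by omega
    have hNR : (0:ℝ) < N := by positivity
    have hNgt : C₁ / (L * τ) < N := by
      have : (N0:ℝ) ≤ N := by rw [hNdef]; push_cast; linarith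
      linarith
    refine ⟨(min ε₀ (1/2)) / N, by positivity, ?_⟩
    intro q hq hqb
    -- first element
    have hqb1 : |α * q - round (α * q)| < ε₀ := by
      have h1 : (min ε₀ (1/2)) / N ≤ min ε₀ (1/2) := by
        apply div_le_self (le_of_lt (lt_min hε₀ (by norm_num))) (by exact_mod_cast hN1)
      linarith [min_le_left ε₀ (1/2:ℝ), hqb]
    obtain ⟨u1, hu1, hu1b, hu1d⟩ := hC q hq hqb1
    -- inductive claim : the u for j·q is j·u1
    have claim : ∀ j : ℕ, 1 ≤ j → j ≤ N →
        |(((j:ℤ) * u1 : ℤ):ℝ) * L - (((j:ℤ) * q : ℤ):ℝ) * L'| ≤ C₁ ∧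
        |α * (((j:ℤ) * u1 : ℤ):ℝ) - round (α * (((j:ℤ) * u1 : ℤ):ℝ))| <
          min (min (κ/2) 1) (ζ/4) := by
      intro j hj1
      induction j with
      | zero => omega
      | succ i IH =>
        intro hjN
        rcases Nat.lt_or_ge i 1 with h1 | hi1
        · -- j = 1
          have hi0 : i = 0 := by omega
          subst hi0
          constructor
          · push_cast
            simpa using hu1d
          · push_cast
            simpa using hu1b
        · -- i ≥ 1
          obtain ⟨IHd, IHb⟩ := IH (by omega) (by omega)
          have hjq_pos : 0 < ((i:ℤ) + 1) * q := by positivity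
          have hjq_bohr : |α * ((((i:ℤ) + 1) * q : ℤ):ℝ) -
              round (α * ((((i:ℤ) + 1) * q : ℤ):ℝ))| < ε₀ := by
            have heq : α * ((((i:ℤ) + 1) * q : ℤ):ℝ) = ((i + 1 : ℕ):ℝ) * (α * q) := by
              push_cast; ring
            rw [heq]
            calc |((i + 1 : ℕ):ℝ) * (α * q) - round (((i + 1 : ℕ):ℝ) * (α * q))| ≤
                ((i + 1 : ℕ):ℝ) * |α * q - round (α * q)| := nd_nsmul _ _
              _ < ((i + 1 : ℕ):ℝ) * ((min ε₀ (1/2)) / N) := by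
                  apply mul_lt_mul_of_pos_left hqb (by positivity)
              _ ≤ (N:ℝ) * ((min ε₀ (1/2)) / N) := by
                  apply mul_le_mul_of_nonneg_right _ (by positivity)
                  exact_mod_cast hjN
              _ = min ε₀ (1/2) := by field_simp
              _ ≤ ε₀ := min_le_left _ _
          obtain ⟨u', hu', hu'b, hu'd⟩ := hC (((i:ℤ) + 1) * q) hjq_pos hjq_bohr
          -- v = u' - i·u1 - u1 must vanish
          have hvL : |((u' - (i:ℤ) * u1 - u1 : ℤ):ℝ)| * L ≤ 3 * C₁ := by
            have hexp : ((u' - (i:ℤ) * u1 - u1 : ℤ):ℝ) * L =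
                ((u':ℝ) * L - ((((i:ℤ) + 1) * q : ℤ):ℝ) * L') -
                ((((i:ℤ) * u1 : ℤ):ℝ) * L - (((i:ℤ) * q : ℤ):ℝ) * L') -
                (((u1:ℤ):ℝ) * L - ((q:ℤ):ℝ) * L') := by
              push_cast; ring
            rw [← abs_of_pos hL, ← abs_mul, hexp]
            calc |_ - _ - _| ≤ |(u':ℝ) * L - ((((i:ℤ) + 1) * q : ℤ):ℝ) * L'| +
                  |(((i:ℤ) * u1 : ℤ):ℝ) * L - (((i:ℤ) * q : ℤ):ℝ) * L'| +
                  |((u1:ℤ):ℝ) * L - ((q:ℤ):ℝ) * L'| := abs_sub_abs3 _ _ _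
              _ ≤ C₁ + C₁ + C₁ := by
                  refine add_le_add (add_le_add hu'd IHd) ?_
                  push_cast
                  exact hu1d
              _ = 3 * C₁ := by ring
          have hvW : |u' - (i:ℤ) * u1 - u1| ≤ W := by
            have h2 : |((u' - (i:ℤ) * u1 - u1 : ℤ):ℝ)| ≤ 3 * C₁ / L := by
              rw [le_div_iff₀ hL]; exact hvL
            have h3 : (3:ℝ) * C₁ / L < ((W:ℤ):ℝ) := by
              rw [hWdef]; push_cast; exact Int.lt_floor_add_one _
            have h4 : |((u' - (i:ℤ) * u1 - u1 : ℤ):ℝ)| < ((W:ℤ):ℝ) := lt_of_le_of_lt h2 h3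
            rw [← Int.cast_abs] at h4
            exact_mod_cast h4.le
          have hvbohr : |α * ((u' - (i:ℤ) * u1 - u1 : ℤ):ℝ) -
              round (α * ((u' - (i:ℤ) * u1 - u1 : ℤ):ℝ))| < ζ := by
            have hz : α * ((u' - (i:ℤ) * u1 - u1 : ℤ):ℝ) -
                ((round (α * (u':ℝ)) - round (α * (((i:ℤ) * u1 : ℤ):ℝ)) -
                  round (α * ((u1:ℤ):ℝ)) : ℤ):ℝ) =
                (α * (u':ℝ) - round (α * (u':ℝ))) -
                (α * (((i:ℤ) * u1 : ℤ):ℝ) - round (α * (((i:ℤ) * u1 : ℤ):ℝ))) -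
                (α * ((u1:ℤ):ℝ) - round (α * ((u1:ℤ):ℝ))) := by
              push_cast; ring
            calc |α * ((u' - (i:ℤ) * u1 - u1 : ℤ):ℝ) -
                round (α * ((u' - (i:ℤ) * u1 - u1 : ℤ):ℝ))| ≤
                |α * ((u' - (i:ℤ) * u1 - u1 : ℤ):ℝ) -
                  ((round (α * (u':ℝ)) - round (α * (((i:ℤ) * u1 : ℤ):ℝ)) -
                    round (α * ((u1:ℤ):ℝ)) : ℤ):ℝ)| := abs_sub_round_le _ _
              _ = |(α * (u':ℝ) - round (α * (u':ℝ))) -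
                  (α * (((i:ℤ) * u1 : ℤ):ℝ) - round (α * (((i:ℤ) * u1 : ℤ):ℝ))) -
                  (α * ((u1:ℤ):ℝ) - round (α * ((u1:ℤ):ℝ)))| := by rw [hz]
              _ ≤ |α * (u':ℝ) - round (α * (u':ℝ))| +
                  |α * (((i:ℤ) * u1 : ℤ):ℝ) - round (α * (((i:ℤ) * u1 : ℤ):ℝ))| +
                  |α * ((u1:ℤ):ℝ) - round (α * ((u1:ℤ):ℝ))| := abs_sub_abs3 _ _ _
              _ < ζ/4 + ζ/4 + ζ/4 := by
                  have b1 : |α * (u':ℝ) - round (α * (u':ℝ))| < ζ/4 :=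
                    lt_of_lt_of_le hu'b (min_le_right _ _)
                  have b2 : |α * (((i:ℤ) * u1 : ℤ):ℝ) -
                      round (α * (((i:ℤ) * u1 : ℤ):ℝ))| < ζ/4 :=
                    lt_of_lt_of_le IHb (min_le_right _ _)
                  have b3 : |α * ((u1:ℤ):ℝ) - round (α * ((u1:ℤ):ℝ))| < ζ/4 := by
                    have := lt_of_lt_of_le hu1b (min_le_right _ _)
                    exact_mod_cast this
                  linarith
              _ ≤ ζ := by linarith
          have hv0 : u' - (i:ℤ) * u1 - u1 = 0 := by
            by_contra hv
            have := hζmin _ hv hvW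
            linarith [hvbohr]
          have hu'eq : u' = ((i:ℤ) + 1) * u1 := by linarith [hv0]
          have hcastu : ((i:ℝ) + 1) * (u1:ℝ) = (u':ℝ) := by
            have h9 := congrArg (fun z : ℤ => (z:ℝ)) hu'eq
            push_cast at h9
            linarith [h9]
          constructor
          · push_cast
            push_cast at hu'd
            rw [hcastu]
            exact hu'd
          · push_cast
            rw [hcastu]
            exact hu'b
    -- conclude : |u1 L - q L'| ≤ C₁ / N  hence the rounding bound
    obtain ⟨hNd, _⟩ := claim N hN1 (le_refl N)
    have hstep : |(u1:ℝ) * L - (q:ℝ) * L'| ≤ C₁ / N := by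
      have hexp : (((N:ℤ) * u1 : ℤ):ℝ) * L - (((N:ℤ) * q : ℤ):ℝ) * L' =
          (N:ℝ) * ((u1:ℝ) * L - (q:ℝ) * L') := by push_cast; ring
      rw [hexp, abs_mul, abs_of_pos hNR] at hNd
      rw [le_div_iff₀ hNR]
      linarith [hNd]
    have hfinal : |(L'/L) * (q:ℝ) - (u1:ℝ)| ≤ τ := by
      have heq : (L'/L) * (q:ℝ) - (u1:ℝ) = -((u1:ℝ) * L - (q:ℝ) * L') / L := by
        field_simp
        ring
      rw [heq, abs_div, abs_of_pos hL, abs_neg]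
      rw [div_le_iff₀ hL]
      have hCN : C₁ / N ≤ τ * L := by
        rw [div_le_iff₀ hNR]
        rw [div_lt_iff₀ (by positivity : (0:ℝ) < L * τ)] at hNgt
        nlinarith
      linarith [hstep]
    calc |(L'/L) * (q:ℝ) - round ((L'/L) * (q:ℝ))| ≤ |(L'/L) * (q:ℝ) - (u1:ℝ)| :=
        abs_sub_round_le _ _
      _ ≤ τ := hfinal
  -- apply the key rigidity lemma
  obtain ⟨e, f, hef⟩ := keyE hirr P
  have hratio : L' = ((e:ℝ) + (f:ℝ) * α) * L := by
    rw [← hef]; field_simp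
  -- extract coefficients via linear independence
  have hcoeff := Fintype.linearIndependent_iff.mp hind
    ![((e * round (α * n) - round (α * n') : ℤ):ℚ),
      ((e * n + f * round (α * n) - n' : ℤ):ℚ), ((f * n : ℤ):ℚ)]
  have hsum : ∑ i, (![((e * round (α * n) - round (α * n') : ℤ):ℚ),
      ((e * n + f * round (α * n) - n' : ℤ):ℚ), ((f * n : ℤ):ℚ)]) i •
      (![(1 : ℝ), α, α ^ 2]) i = 0 := by
    simp [Fin.sum_univ_three, Rat.smul_def]
    push_cast
    rw [hLdef, hL'def] at hratio
    linear_combination -hratio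
  have h0 := hcoeff hsum 0
  have h1 := hcoeff hsum 1
  have h2 := hcoeff hsum 2
  simp at h0 h1 h2
  -- decode the three coefficient equations over ℤ
  have hz0 : e * round (α * n) - round (α * n') = 0 := by exact_mod_cast h0
  have hz1 : e * n + f * round (α * n) - n' = 0 := by exact_mod_cast h1
  have hf0 : f = 0 := by
    rcases h2 with h9 | h9
    · exact_mod_cast h9
    · exfalso
      have : n = 0 := by exact_mod_cast h9
      omega
  subst hf0
  have hn'e : n' = e * n := by omega
  have hA'e : round (α * n') = e * round (α * n) := by omega
  refine ⟨e, ?_, hn'e, hA'e⟩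
  by_contra he0
  push_neg at he0
  have : e * n ≤ 0 := mul_nonpos_of_nonpos_of_nonneg he0 hn.le
  omega

end Stmt9
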